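/- For the binary alphabet A = {0,1} and any n ≥ 2, there is no linear universal partial word for A^n containing a single ◊ located at position n from the beginning (and hence, by symmetry under reversal, none with the ◊ at position n from the end). -/

import Mathlib

/-- A partial-word symbol over the alphabet `Fin α`: `none` is the wildcard `◊`. -/
abbrev PSym (α : ℕ) := Option (Fin α)

/-- The word `v ∈ A^*` appears as a factor of the partial word `u` at 0-based position `i`:
each symbol of `u` in the window is either `◊` or equals the corresponding letter of `v`. -/
def MatchAt {α : ℕ} (u : List (PSym α)) (v : List (Fin α)) (i : ℕ) : Prop :=
  i + v.length ≤ u.length ∧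
    ∀ j < v.length, u[i + j]? = some none ∨ u[i + j]? = (v[j]?).map some

/-- `u` is a linear universal partial word (upword) for `A^n`, `A = Fin α`:
every word of length `n` over `A` appears exactly once as a factor. -/
def IsLinearUpword (α n : ℕ) (u : List (PSym α)) : Prop :=
  ∀ v : List (Fin α), v.length = n → ∃! i : ℕ, MatchAt u v i

/-- `v` appears as a cyclic factor of the partial word `u` at position `i`
(indices taken modulo `u.length`). -/
def CycMatchAt {α : ℕ} (u : List (PSym α)) (v : List (Fin α)) (i : ℕ) : Prop :=
  ∀ j < v.length,
    u[(i + j) % u.length]? = some none ∨ u[(i + j) % u.length]? = (v[j]?).map some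

/-- `u` is a cyclic universal partial word for `A^n`: every word of length `n` over `A`
appears exactly once as a cyclic factor. -/
def IsCyclicUpword (α n : ℕ) (u : List (PSym α)) : Prop :=
  ∀ v : List (Fin α), v.length = n → ∃! i : ℕ, i < u.length ∧ CycMatchAt u v i

lemma count_one_unique {γ : Type*} [BEq γ] [LawfulBEq γ] (a : γ) :
    ∀ (l : List γ), l.count a = 1 →
      ∀ i j : ℕ, l[i]? = some a → l[j]? = some a → i = j := by
  intro l
  induction l with
  | nil => intro h i j hi; simp at hi
  | cons b t ih =>
    intro hl i j hi hj
    by_cases hb : b = a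
    · subst hb
      have ht : t.count b = 0 := by
        have := List.count_cons_self (a := b) (l := t)
        omega
      have hnot : b ∉ t := by simpa using List.count_eq_zero.mp ht
      match i, j with
      | 0, 0 => rfl
      | 0, j+1 => exact absurd (List.mem_of_getElem? (by simpa using hj)) hnot
      | i+1, _ => exact absurd (List.mem_of_getElem? (by simpa using hi)) hnot
    · have hcount : t.count a = 1 := by
        simp [List.count_cons, hb] at hl
        omega
      match i, j with
      | 0, _ => exact absurd (show b = a by simpa using hi) hb
      | i+1, 0 => exact absurd (show b = a by simpa using hj) hb
      | i+1, j+1 =>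
        have := ih hcount i j (by simpa using hi) (by simpa using hj)
        omega

def letx (u : List (PSym 2)) (k : ℕ) : Fin 2 :=
  match u[k]? with
  | some (some a) => a
  | _ => 0

lemma letx_spec (u : List (PSym 2)) {k d : ℕ} (hk : k < u.length)
    (hud : ∀ i, u[i]? = some none → i = d) (hkd : k ≠ d) :
    u[k]? = some (some (letx u k)) := by
  have h : u[k]? = some u[k] := List.getElem?_eq_getElem hk
  rcases hσ : u[k] with _ | a
  · exact absurd (hud k (by rw [h, hσ])) hkd
  · rw [h, hσ]
    have : letx u k = a := by unfold letx; rw [h, hσ]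
    rw [this]

lemma length_lb (n : ℕ) (u : List (PSym 2)) (hu : IsLinearUpword 2 n u)
    (d : ℕ) (hud : ∀ i, u[i]? = some none → i = d) :
    2 ^ n ≤ 2 * (u.length - n + 1) := by
  classical
  have key : ∀ v : Fin n → Fin 2, ∃! i, MatchAt u (List.ofFn v) i :=
    fun v => hu _ (by simp)
  let F : (Fin n → Fin 2) → ℕ := fun v => (key v).exists.choose
  have hF : ∀ v, MatchAt u (List.ofFn v) (F v) := fun v => (key v).exists.choose_spec
  have hFle : ∀ v, F v ≤ u.length - n := by
    intro v
    have := (hF v).1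
    simp only [List.length_ofFn] at this
    omega
  have hgot : ∀ (v : Fin n → Fin 2) (t : ℕ) (ht : t < n),
      (List.ofFn v)[t]? = some (v ⟨t, ht⟩) := by
    intro v t ht
    rw [List.getElem?_ofFn]
    simp [List.ofFnNthVal, ht]
  let G : (Fin n → Fin 2) → Fin (u.length - n + 1) × Fin 2 := fun v =>
    (⟨F v, by have := hFle v; omega⟩,
      if h : d - F v < n then v ⟨d - F v, h⟩ else 0)
  have hG : Function.Injective G := by
    intro v w hvw
    have h1 : F v = F w := congrArg (fun p => (p.1 : ℕ)) hvw
    have h2 := congrArg Prod.snd hvw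
    funext t
    obtain ⟨t, ht⟩ := t
    by_cases hcase : F v + t = d
    · have hdt : d - F v = t := by omega
      simp only [G] at h2
      rw [← h1, hdt] at h2
      simp only [dif_pos ht] at h2
      exact h2
    · have hv' := (hF v).2 t (by simp [ht])
      have hw' := (hF w).2 t (by simp [ht])
      rw [← h1] at hw'
      rcases hv' with h | h
      · exact absurd (hud _ h) hcase
      rcases hw' with h' | h'
      · exact absurd (hud _ h') hcase
      rw [hgot v t ht] at h
      rw [hgot w t ht] at h'
      rw [h] at h'
      simpa using h'
  calc 2 ^ n = Fintype.card (Fin n → Fin 2) := by simp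
    _ ≤ Fintype.card (Fin (u.length - n + 1) × Fin 2) := Fintype.card_le_of_injective G hG
    _ = 2 * (u.length - n + 1) := by simp [mul_comm]

lemma main_lemma (n : ℕ) (hn : 2 ≤ n) (u : List (PSym 2)) (hu : IsLinearUpword 2 n u)
    (hc : u.count (none : PSym 2) = 1) : u[n - 1]? ≠ some none := by
  intro hd
  have hud : ∀ i, u[i]? = some none → i = n - 1 :=
    fun i hi => count_one_unique none u hc i (n - 1) hi hd
  have hbound : 2 ^ n ≤ 2 * (u.length - n + 1) := length_lb n u hu (n - 1) hud
  have hpow1 : n - 1 < 2 ^ (n - 1) := Nat.lt_two_pow_self (n := n - 1)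
  have hpow2 : n - 2 < 2 ^ (n - 2) := Nat.lt_two_pow_self (n := n - 2)
  have he1 : 2 ^ n = 2 * 2 ^ (n - 1) := by
    conv_lhs => rw [show n = (n - 1) + 1 by omega]
    ring
  have he2 : 2 ^ (n - 1) = 2 * 2 ^ (n - 2) := by
    conv_lhs => rw [show n - 1 = (n - 2) + 1 by omega]
    ring
  have hL1 : 2 * n - 1 ≤ u.length := by omega
  have hlet : ∀ k, k < u.length → k ≠ n - 1 → u[k]? = some (some (letx u k)) :=
    fun k hk hkd => letx_spec u hk hud hkd
  set β : List (Fin 2) := (List.range (n - 1)).map (fun s => letx u (n + s)) with hβ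
  have hβlen : β.length = n - 1 := by simp [hβ]
  have hβget : ∀ s, s < n - 1 → β[s]? = some (letx u (n + s)) := by
    intro s hs
    simp [hβ, List.getElem?_map, List.getElem?_range, hs]
  -- F1 : any word of the form x :: β is matched only at position n - 1
  have hF1 : ∀ x : Fin 2, ∀ i, MatchAt u (x :: β) i → i = n - 1 := by
    intro x i hi
    have hlen : (x :: β).length = n := by simp [hβlen]; omega
    have hm : MatchAt u (x :: β) (n - 1) := by
      constructor
      · rw [hlen]; omega
      · intro j hj
        rw [hlen] at hj
        match j with
        | 0 => left; simpa using hd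
        | s + 1 =>
          right
          have hs : s < n - 1 := by omega
          rw [show n - 1 + (s + 1) = n + s by omega,
            hlet (n + s) (by omega) (by omega)]
          simp [hβget s hs]
    exact (hu (x :: β) hlen).unique hi hm
  -- C : words of the form β ++ [c] are matched only at 0 or n
  have happlen : ∀ c : Fin 2, (β ++ [c]).length = n := by
    intro c; simp [hβlen]; omega
  have happget : ∀ (c : Fin 2) (s : ℕ), s < n - 1 → (β ++ [c])[s]? = β[s]? := by
    intro c s hs
    rw [List.getElem?_append, if_pos (show s < β.length by rw [hβlen]; omega)]
  -- C
  have hC : ∀ c : Fin 2, ∀ j, MatchAt u (β ++ [c]) j → j = 0 ∨ j = n := by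
    intro c j hj
    match j with
    | 0 => left; rfl
    | j' + 1 =>
      right
      have hjL : j' + 1 + n ≤ u.length := by
        have := hj.1; rwa [happlen c] at this
      have hj'L : j' < u.length := by omega
      have hmatch : MatchAt u (letx u j' :: β) j' := by
        constructor
        · simp [hβlen]; omega
        · intro t ht
          simp only [List.length_cons, hβlen] at ht
          match t with
          | 0 =>
            rcases hσ : u[j'] with _ | a
            · left
              rw [Nat.add_zero, List.getElem?_eq_getElem hj'L, hσ]
            · right
              rw [Nat.add_zero, List.getElem?_eq_getElem hj'L, hσ]
              have hla : letx u j' = a := by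
                unfold letx
                rw [List.getElem?_eq_getElem hj'L, hσ]
              simp [hla]
          | s + 1 =>
            have hs : s < n - 1 := by omega
            have hstep := hj.2 s (by rw [happlen c]; omega)
            rw [show j' + 1 + s = j' + (s + 1) by omega] at hstep
            rcases hstep with h | h
            · left; exact h
            · right
              rw [h, happget c s hs]
              simp
      have := hF1 (letx u j') j' hmatch
      omega
  -- D
  have hD : ∀ c : Fin 2, MatchAt u (β ++ [c]) n → c = letx u (2 * n - 1) := by
    intro c hcM
    have h2L : 2 * n ≤ u.length := by
      have := hcM.1; rw [happlen c] at this; omega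
    have hstep := hcM.2 (n - 1) (by rw [happlen c]; omega)
    rw [show n + (n - 1) = 2 * n - 1 by omega] at hstep
    rcases hstep with h | h
    · exact absurd (hud _ h) (by omega)
    · rw [hlet (2 * n - 1) (by omega) (by omega)] at h
      have hgc : (β ++ [c])[n - 1]? = some c := by
        rw [List.getElem?_append, if_neg (by rw [hβlen]; omega)]
        simp [hβlen]
      rw [hgc] at h
      have := h.symm
      simpa using this
  -- existence of c₀ matched at 0, giving the prefix = β
  have hax : ∀ a : Fin 2, a + 1 ≠ a := by decide
  obtain ⟨j0, hj0, -⟩ := hu (β ++ [letx u (2 * n - 1) + 1]) (happlen _)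
  have hj00 : j0 = 0 := by
    rcases hC _ _ hj0 with h | h
    · exact h
    · exact absurd (hD _ (h ▸ hj0)) (hax _)
  subst hj00
  have hαβ : ∀ t, t < n - 1 → u[t]? = some (some (letx u (n + t))) := by
    intro t ht
    have hstep := hj0.2 t (by rw [happlen]; omega)
    rw [Nat.zero_add] at hstep
    rcases hstep with h | h
    · exact absurd (hud _ h) (by omega)
    · rw [h, happget _ t ht, hβget t ht]
      rfl
  by_cases h2L : 2 * n ≤ u.length
  · -- word β ++ [letx u (2n-1)] is matched at 0 and at n
    set w : List (Fin 2) := β ++ [letx u (2 * n - 1)] with hw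
    have hwlen : w.length = n := happlen _
    have hwget : ∀ t, t < n → w[t]? = some (letx u (n + t)) := by
      intro t ht
      by_cases h : t < n - 1
      · rw [hw, happget _ t h, hβget t h]
      · have ht1 : t = n - 1 := by omega
        subst ht1
        rw [hw, List.getElem?_append, if_neg (by rw [hβlen]; omega)]
        simp [hβlen, show n + (n - 1) = 2 * n - 1 by omega]
    have hM0 : MatchAt u w 0 := by
      constructor
      · rw [hwlen]; omega
      · intro t ht
        rw [hwlen] at ht
        by_cases h : t < n - 1
        · right
          rw [Nat.zero_add, hαβ t h, hwget t ht]
          rfl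
        · left
          have ht1 : t = n - 1 := by omega
          subst ht1
          rw [Nat.zero_add]
          exact hd
    have hMn : MatchAt u w n := by
      constructor
      · rw [hwlen]; omega
      · intro t ht
        rw [hwlen] at ht
        right
        rw [hlet (n + t) (by omega) (by omega), hwget t ht]
        rfl
    have := (hu w hwlen).unique hM0 hMn
    omega
  · -- short case: forces n = 2, u.length = 3
    have hn2 : n = 2 := by omega
    subst hn2
    have hL3 : u.length = 3 := by omega
    have hmatch : MatchAt u (letx u 0 :: β) 0 := by
      constructor
      · simp [hβlen]; omega
      · intro t ht
        simp only [List.length_cons, hβlen] at ht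
        match t with
        | 0 =>
          right
          rw [Nat.zero_add, hlet 0 (by omega) (by omega)]
          rfl
        | 1 =>
          left
          rw [Nat.zero_add]
          exact hd
    have := hF1 (letx u 0) 0 hmatch
    omega

lemma matchAt_reverse {a : ℕ} (u : List (PSym a)) (v : List (Fin a)) (i : ℕ)
    (h : MatchAt u v i) : MatchAt u.reverse v.reverse (u.length - v.length - i) := by
  obtain ⟨h1, h2⟩ := h
  constructor
  · simp; omega
  · intro j hj
    rw [List.length_reverse] at hj
    have hidx : u.length - v.length - i + j < u.length := by omega
    rw [List.getElem?_reverse hidx, List.getElem?_reverse hj,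
      show u.length - 1 - (u.length - v.length - i + j) = i + (v.length - 1 - j) by omega]
    exact h2 (v.length - 1 - j) (by omega)

lemma isLinearUpword_reverse {a n : ℕ} (u : List (PSym a)) (h : IsLinearUpword a n u) :
    IsLinearUpword a n u.reverse := by
  intro v hv
  obtain ⟨i, hi, hiu⟩ := h v.reverse (by simpa using hv)
  refine ⟨u.length - n - i, ?_, ?_⟩
  · have := matchAt_reverse u v.reverse i hi
    simpa [hv] using this
  · intro j hj
    have h2 := matchAt_reverse u.reverse v j hj
    simp only [List.reverse_reverse, List.length_reverse, hv] at h2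
    have hij := hiu _ h2
    have hjle : j + n ≤ u.length := by
      have := hj.1
      rw [hv, List.length_reverse] at this
      omega
    have hile : i + n ≤ u.length := by
      have := hi.1
      rw [List.length_reverse, hv] at this
      omega
    omega

/-- For `A = {0,1}` and any `n ≥ 2`, there is no linear upword for `A^n`
with a single `◊` located at position `n` from the beginning or from the end (positions are
1-based, so position `n` from the beginning is index `n-1` and position `n` from the end is
index `u.length - n`). -/
theorem no_upword_diamond_at_pos_n (n : ℕ) (hn : 2 ≤ n)
    (u : List (PSym 2)) (hu : IsLinearUpword 2 n u)
    (hc : u.count (none : PSym 2) = 1) :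
    u[n - 1]? ≠ some none ∧ u[u.length - n]? ≠ some none := by
  have hLn : n < u.length := by
    obtain ⟨d, hdd⟩ : ∃ i : ℕ, u[i]? = some none :=
      List.mem_iff_getElem?.mp (List.count_pos_iff.mp (by omega))
    have hud : ∀ i, u[i]? = some none → i = d :=
      fun i hi => count_one_unique none u hc i d hi hdd
    have hbound := length_lb n u hu d hud
    have hp : 2 ^ 2 ≤ 2 ^ n := Nat.pow_le_pow_right (by norm_num) hn
    omega
  constructor
  · exact main_lemma n hn u hu hc
  · intro hd
    have hrev : u.reverse[n - 1]? = some none := by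
      rw [List.getElem?_reverse (by omega), show u.length - 1 - (n - 1) = u.length - n by omega]
      exact hd
    exact main_lemma n hn u.reverse (isLinearUpword_reverse u hu)
      (by rw [List.count_reverse]; exact hc) hrev
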